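/- Let p > 0 and for ε > 0 define G_{3,ε}(t,s) = -(e^{-ε√p|t-s|} + e^{-ε√p(1-|t-s|)}) / (2ε√p·(1-e^{-ε√p})) on [0,1]×[0,1]. Then sup_{t,s ∈ [0,1]} |ε²·G_{3,ε}(t,s) + 1/p| → 0 as ε → 0⁺. -/

import Mathlib

open Filter Set

lemma green_key (p : ℝ) (hp : 0 < p) (ε : ℝ) (hε : 0 < ε) (u : ℝ)
    (hu0 : 0 ≤ u) (hu1 : u ≤ 1) :
    |ε ^ 2 *
        (-(Real.exp (-(ε * Real.sqrt p * u)) +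
            Real.exp (-(ε * Real.sqrt p * (1 - u)))) /
          (2 * ε * Real.sqrt p * (1 - Real.exp (-(ε * Real.sqrt p)))))
      + 1 / p| ≤ (Real.exp (ε * Real.sqrt p) - 1) / p := by
  have hsp : 0 < Real.sqrt p := Real.sqrt_pos.2 hp
  have hps : Real.sqrt p ^ 2 = p := Real.sq_sqrt hp.le
  set a : ℝ := ε * Real.sqrt p with ha
  have ha0 : 0 < a := mul_pos hε hsp
  set E : ℝ := Real.exp a with hE
  set F : ℝ := Real.exp (-a) with hF
  have hEF : E * F = 1 := by
    rw [hE, hF, ← Real.exp_add]; simp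
  have hF0 : 0 < F := Real.exp_pos _
  have hE1 : a + 1 ≤ E := Real.add_one_le_exp a
  have hF1 : -a + 1 ≤ F := Real.add_one_le_exp (-a)
  have hFlt : F < 1 := by rw [hF]; exact Real.exp_lt_one_iff.2 (by linarith)
  set D : ℝ := 1 - F with hD
  have hD0 : 0 < D := by rw [hD]; linarith
  set S : ℝ := Real.exp (-(a * u)) + Real.exp (-(a * (1 - u))) with hS
  have hS0 : 0 < S := by positivity
  have hS_ub : S ≤ 2 := by
    have h1 : Real.exp (-(a * u)) ≤ 1 := Real.exp_le_one_iff.2 (by nlinarith)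
    have h2 : Real.exp (-(a * (1 - u))) ≤ 1 := Real.exp_le_one_iff.2 (by nlinarith)
    rw [hS]; linarith
  have hS_lb : 2 * F ≤ S := by
    have h1 : F ≤ Real.exp (-(a * u)) := Real.exp_le_exp.2 (by nlinarith)
    have h2 : F ≤ Real.exp (-(a * (1 - u))) := Real.exp_le_exp.2 (by nlinarith)
    rw [hS]; linarith
  have hrw : ε ^ 2 * (-(S) / (2 * ε * Real.sqrt p * D)) + 1 / p
      = 1 / p - a * S / (2 * p * D) := by
    rw [ha]
    field_simp
    ring_nf
    rw [hps]
  rw [hrw]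
  have hED : E * D = E - 1 := by
    have h : E * D = E - E * F := by rw [hD]; ring
    rw [h, hEF]
  have hT2 : a * S / (2 * p * D) ≤ E / p := by
    rw [div_le_div_iff₀ (by positivity) hp]
    calc a * S * p ≤ a * 2 * p :=
          mul_le_mul_of_nonneg_right (mul_le_mul_of_nonneg_left hS_ub ha0.le) hp.le
      _ ≤ (E - 1) * 2 * p :=
          mul_le_mul_of_nonneg_right (mul_le_mul_of_nonneg_right (by linarith) (by norm_num)) hp.le
      _ = E * (2 * p * D) := by rw [← hED]; ring
  have hT1 : F / p ≤ a * S / (2 * p * D) := by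
    rw [div_le_div_iff₀ hp (by positivity)]
    have haD : D ≤ a := by rw [hD]; linarith
    calc F * (2 * p * D) = 2 * F * D * p := by ring
      _ ≤ 2 * F * a * p :=
          mul_le_mul_of_nonneg_right (mul_le_mul_of_nonneg_left haD (by positivity)) hp.le
      _ ≤ S * a * p :=
          mul_le_mul_of_nonneg_right (mul_le_mul_of_nonneg_right hS_lb ha0.le) hp.le
      _ = a * S * p := by ring
  rw [abs_le]
  constructor
  · have h : 1 / p - E / p = -((E - 1) / p) := by ring
    linarith [hT2, h.ge]
  · have h : 1 / p - F / p - (E - 1) / p = (2 - (E + F)) / p := by ring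
    have h2 : (2 - (E + F)) / p ≤ 0 := by
      apply div_nonpos_of_nonpos_of_nonneg <;> linarith
    linarith

theorem green_periodic_uniform_limit (p : ℝ) (hp : 0 < p) :
    Tendsto
      (fun ε : ℝ =>
        ⨆ t : Set.Icc (0:ℝ) 1, ⨆ s : Set.Icc (0:ℝ) 1,
          |ε ^ 2 *
              (-(Real.exp (-(ε * Real.sqrt p * |(t:ℝ) - s|)) +
                  Real.exp (-(ε * Real.sqrt p * (1 - |(t:ℝ) - s|)))) /
                (2 * ε * Real.sqrt p * (1 - Real.exp (-(ε * Real.sqrt p)))))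
            + 1 / p|)
      (nhdsWithin 0 (Set.Ioi 0)) (nhds 0) := by
  haveI : Nonempty (Set.Icc (0:ℝ) 1) := ⟨⟨0, by norm_num⟩⟩
  have hh : Tendsto (fun ε : ℝ => (Real.exp (ε * Real.sqrt p) - 1) / p)
      (nhdsWithin 0 (Set.Ioi 0)) (nhds 0) := by
    have hc : Continuous (fun ε : ℝ => (Real.exp (ε * Real.sqrt p) - 1) / p) := by
      fun_prop
    refine tendsto_nhdsWithin_of_tendsto_nhds ?_
    simpa using hc.tendsto 0
  refine tendsto_of_tendsto_of_tendsto_of_le_of_le' tendsto_const_nhds hh ?_ ?_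
  · filter_upwards with ε
    exact Real.iSup_nonneg fun t => Real.iSup_nonneg fun s => abs_nonneg _
  · filter_upwards [self_mem_nhdsWithin] with ε hε
    refine ciSup_le fun t => ciSup_le fun s => ?_
    have ht := t.2
    have hs := s.2
    simp only [Set.mem_Icc] at ht hs
    exact green_key p hp ε hε |(t:ℝ) - s| (abs_nonneg _)
      (abs_le.2 ⟨by linarith [ht.1, ht.2, hs.1, hs.2], by linarith [ht.1, ht.2, hs.1, hs.2]⟩)
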